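/- Let L be the operator sending a function f to the derivative of (sec·f), i.e. L(f)(x) = d/dx (sec(x)·f(x)). Then for every natural number n ≥ 0 and every real x with cos(x) ≠ 0, L^n(tan)(x) = ∑_{k=0}^{⌊(n+1)/2⌋} n! · C(n+1, 2k) · tan(x)^{n−2k+1} · sec(x)^{n+2k}. -/

import Mathlib

/-- sec(x) = 1/cos(x). -/
noncomputable def sec (x : ℝ) : ℝ := (Real.cos x)⁻¹

lemma hasDerivAt_sec {x : ℝ} (hx : Real.cos x ≠ 0) :
    HasDerivAt sec (sec x * Real.tan x) x := by
  have h := (Real.hasDerivAt_cos x).inv hx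
  refine h.congr_deriv ?_
  rw [sec, Real.tan_eq_sin_div_cos]
  field_simp

lemma keyR (n j : ℕ) (h : 2*j+1 ≤ n) :
    ((n:ℝ)+1) * ((n+2).choose (2*j+2)) =
      ((n+1).choose (2*j+2) : ℝ) * (n+2*j+3) + ((n+1).choose (2*j) : ℝ) * ((n:ℝ)+1-2*j) := by
  have h1 := Nat.choose_succ_succ (n+1) (2*j+1)
  have h2 := Nat.add_one_mul_choose_eq n (2*j+1)
  have h4 := Nat.choose_succ_succ n (2*j)
  have h3 := Nat.choose_mul_succ_eq n (2*j)
  have h3' : (n.choose (2*j) : ℝ) * (n+1) = ((n+1).choose (2*j) : ℝ) * ((n:ℝ)+1-2*j) := by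
    have := congrArg (Nat.cast (R := ℝ)) h3
    push_cast [Nat.cast_sub (by omega : 2*j ≤ n+1)] at this
    linarith [this]
  have h1' := congrArg (Nat.cast (R := ℝ)) h1
  have h2' := congrArg (Nat.cast (R := ℝ)) h2
  have h4' := congrArg (Nat.cast (R := ℝ)) h4
  push_cast at h1' h2' h4'
  linear_combination ((n:ℝ)+1) * h1' + h2' + ((n:ℝ)+1) * h4' + h3'

lemma term_step (n j : ℕ) (T S : ℝ) :
    ((n+1).factorial : ℝ) * ((n+2).choose (2*(j+1))) * T^(n+2-2*(j+1)) * S^(n+1+2*(j+1))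
    = (n.factorial : ℝ) * ((n+1).choose (2*(j+1))) *
        (T^(n+1-2*(j+1)) * ((n+2*(j+1)+1 : ℕ) * S^(n+2*(j+1)+1-1) * (S*T)))
      + (n.factorial : ℝ) * ((n+1).choose (2*j)) *
        (((n+1-2*j : ℕ) * T^(n+1-2*j-1) * S^2) * S^(n+2*j+1)) := by
  rcases le_or_gt (2*j+1) n with h | h
  · rw [show 2*(j+1) = 2*j+2 from by ring]
    have e1 : n+2-(2*j+2) = (n-2*j-1)+1 := by omega
    have e2 : n+1-(2*j+2) = n-2*j-1 := by omega
    have e3 : n+1-2*j-1 = (n-2*j-1)+1 := by omega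
    have e4 : n+1+(2*j+2) = n+2*j+3 := by omega
    have e5 : n+(2*j+2)+1-1 = n+2*j+2 := by omega
    have e6 : ((n+1-2*j : ℕ) : ℝ) = (n:ℝ)+1-2*j := by
      push_cast [Nat.cast_sub (by omega : 2*j ≤ n+1)]; ring
    rw [e1, e2, e3, e4, e5, e6]
    have hk := keyR n j h
    push_cast [Nat.factorial_succ, pow_succ] at *
    linear_combination (n.factorial:ℝ) * T^(n-2*j-1) * T * S^(n+2*j+3) * hk
  · rcases le_or_gt (2*j) n with h2 | h2
    · have hn : n = 2*j := by omega
      subst hn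
      have c1 : (2*j+1+1).choose (2*(j+1)) = 1 := by
        rw [show 2*(j+1) = 2*j+1+1 by ring]; exact Nat.choose_self _
      have c2 : (2*j+1).choose (2*(j+1)) = 0 := Nat.choose_eq_zero_of_lt (by omega)
      have c3 : (2*j+1).choose (2*j) = 2*j+1 := by
        rw [show 2*j+1 = (2*j)+1 by ring]; exact Nat.choose_succ_self_right _
      have e1 : 2*j+2-2*(j+1) = 0 := by omega
      have e2 : 2*j+1-2*j-1 = 0 := by omega
      have e3 : 2*j+1-2*j = 1 := by omega
      have e4 : 2*j+1+2*(j+1) = 2*j+2*j+3 := by omega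
      have e5 : 2*j+2*j+1+2 = 2*j+2*j+3 := by omega
      rw [show (2*j+1) = 2*j+1 from rfl]
      simp only [c1, c2, c3, e1, e2, e3, e4]
      push_cast [Nat.factorial_succ]
      ring_nf
    · have c0 : (n+2).choose (2*(j+1)) = 0 := Nat.choose_eq_zero_of_lt (by omega)
      have c1 : (n+1).choose (2*(j+1)) = 0 := Nat.choose_eq_zero_of_lt (by omega)
      have c2 : n+1-2*j = 0 := by omega
      simp [c0, c1, c2]

lemma sum_step (n : ℕ) (T S : ℝ) :
    (∑ k ∈ Finset.range ((n+1)/2+1), (n.factorial : ℝ) * ((n+1).choose (2*k)) *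
      (((n+1-2*k : ℕ) * T^(n+1-2*k-1) * S^2) * S^(n+2*k+1)
        + T^(n+1-2*k) * ((n+2*k+1 : ℕ) * S^(n+2*k+1-1) * (S*T))))
    = ∑ k ∈ Finset.range ((n+2)/2+1), ((n+1).factorial : ℝ) * ((n+2).choose (2*k)) *
        T^(n+2-2*k) * S^(n+1+2*k) := by
  have ext1 : (∑ k ∈ Finset.range ((n+1)/2+1), (n.factorial : ℝ) * ((n+1).choose (2*k)) *
      (((n+1-2*k : ℕ) * T^(n+1-2*k-1) * S^2) * S^(n+2*k+1)
        + T^(n+1-2*k) * ((n+2*k+1 : ℕ) * S^(n+2*k+1-1) * (S*T))))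
      = ∑ k ∈ Finset.range (n+2), (n.factorial : ℝ) * ((n+1).choose (2*k)) *
      (((n+1-2*k : ℕ) * T^(n+1-2*k-1) * S^2) * S^(n+2*k+1)
        + T^(n+1-2*k) * ((n+2*k+1 : ℕ) * S^(n+2*k+1-1) * (S*T))) := by
    apply Finset.sum_subset
    · intro k hk
      simp only [Finset.mem_range] at *
      omega
    · intro k hk hk'
      simp only [Finset.mem_range] at hk hk'
      have : n+1 < 2*k := by omega
      simp [Nat.choose_eq_zero_of_lt this]
  have ext2 : (∑ k ∈ Finset.range ((n+2)/2+1), ((n+1).factorial : ℝ) * ((n+2).choose (2*k)) *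
        T^(n+2-2*k) * S^(n+1+2*k))
      = ∑ k ∈ Finset.range (n+2), ((n+1).factorial : ℝ) * ((n+2).choose (2*k)) *
        T^(n+2-2*k) * S^(n+1+2*k) := by
    apply Finset.sum_subset
    · intro k hk
      simp only [Finset.mem_range] at *
      omega
    · intro k hk hk'
      simp only [Finset.mem_range] at hk hk'
      have : n+2 < 2*k := by omega
      simp [Nat.choose_eq_zero_of_lt this]
  rw [ext1, ext2]
  have split : ∀ k ∈ Finset.range (n+2), (n.factorial : ℝ) * ((n+1).choose (2*k)) *
      (((n+1-2*k : ℕ) * T^(n+1-2*k-1) * S^2) * S^(n+2*k+1)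
        + T^(n+1-2*k) * ((n+2*k+1 : ℕ) * S^(n+2*k+1-1) * (S*T)))
      = (n.factorial : ℝ) * ((n+1).choose (2*k)) *
          (((n+1-2*k : ℕ) * T^(n+1-2*k-1) * S^2) * S^(n+2*k+1))
        + (n.factorial : ℝ) * ((n+1).choose (2*k)) *
          (T^(n+1-2*k) * ((n+2*k+1 : ℕ) * S^(n+2*k+1-1) * (S*T))) := fun k _ => by ring
  rw [Finset.sum_congr rfl split, Finset.sum_add_distrib]
  rw [Finset.sum_range_succ (fun k => (n.factorial : ℝ) * ((n+1).choose (2*k)) *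
          (((n+1-2*k : ℕ) * T^(n+1-2*k-1) * S^2) * S^(n+2*k+1)))]
  rw [Finset.sum_range_succ' (fun k => (n.factorial : ℝ) * ((n+1).choose (2*k)) *
          (T^(n+1-2*k) * ((n+2*k+1 : ℕ) * S^(n+2*k+1-1) * (S*T))))]
  rw [Finset.sum_range_succ' (fun k => ((n+1).factorial : ℝ) * ((n+2).choose (2*k)) *
        T^(n+2-2*k) * S^(n+1+2*k))]
  have hXlast : (n.factorial : ℝ) * ((n+1).choose (2*(n+1))) *
      (((n+1-2*(n+1) : ℕ) * T^(n+1-2*(n+1)-1) * S^2) * S^(n+2*(n+1)+1)) = 0 := by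
    have : n+1-2*(n+1) = 0 := by omega
    simp [this]
  have hfirst : ((n+1).factorial : ℝ) * ((n+2).choose (2*0)) * T^(n+2-2*0) * S^(n+1+2*0)
      = (n.factorial : ℝ) * ((n+1).choose (2*0)) *
          (T^(n+1-2*0) * ((n+2*0+1 : ℕ) * S^(n+2*0+1-1) * (S*T))) := by
    simp only [Nat.mul_zero, Nat.choose_zero_right, Nat.sub_zero, Nat.add_zero]
    push_cast [Nat.factorial_succ, Nat.add_sub_cancel]
    ring
  rw [hXlast, hfirst]
  have hterms : ∀ j ∈ Finset.range (n+1),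
      (n.factorial : ℝ) * ((n+1).choose (2*(j+1))) *
          (T^(n+1-2*(j+1)) * ((n+2*(j+1)+1 : ℕ) * S^(n+2*(j+1)+1-1) * (S*T)))
        + (n.factorial : ℝ) * ((n+1).choose (2*j)) *
          (((n+1-2*j : ℕ) * T^(n+1-2*j-1) * S^2) * S^(n+2*j+1))
      = ((n+1).factorial : ℝ) * ((n+2).choose (2*(j+1))) * T^(n+2-2*(j+1)) * S^(n+1+2*(j+1)) :=
    fun j _ => (term_step n j T S).symm
  rw [← Finset.sum_congr rfl hterms, Finset.sum_add_distrib]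
  ring

/-- The operator L sending f to the derivative of sec·f. -/
noncomputable def L (f : ℝ → ℝ) : ℝ → ℝ := deriv (fun x => sec x * f x)

theorem iterate_L_tan_explicit (n : ℕ) (x : ℝ) (hx : Real.cos x ≠ 0) :
    L^[n] Real.tan x =
      ∑ k ∈ Finset.range ((n + 1) / 2 + 1),
        (n.factorial : ℝ) * ((n + 1).choose (2 * k)) *
          Real.tan x ^ (n + 1 - 2 * k) * sec x ^ (n + 2 * k) := by
  induction n generalizing x with
  | zero => simp
  | succ n ih =>
    rw [Function.iterate_succ_apply']
    show deriv (fun y => sec y * L^[n] Real.tan y) x = _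
    have hopen : IsOpen {y : ℝ | Real.cos y ≠ 0} :=
      isOpen_ne.preimage Real.continuous_cos
    have hmem : {y : ℝ | Real.cos y ≠ 0} ∈ nhds x := hopen.mem_nhds hx
    have heq : (fun y => sec y * L^[n] Real.tan y) =ᶠ[nhds x]
        (fun y => ∑ k ∈ Finset.range ((n + 1) / 2 + 1),
          (n.factorial : ℝ) * ((n + 1).choose (2 * k)) *
            (Real.tan y ^ (n + 1 - 2 * k) * sec y ^ (n + 2 * k + 1))) := by
      filter_upwards [hmem] with y hy
      rw [ih y hy, Finset.mul_sum]
      refine Finset.sum_congr rfl fun k _ => ?_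
      rw [pow_succ]
      ring
    rw [heq.deriv_eq]
    have hD : HasDerivAt
        (fun y => ∑ k ∈ Finset.range ((n + 1) / 2 + 1),
          (n.factorial : ℝ) * ((n + 1).choose (2 * k)) *
            (Real.tan y ^ (n + 1 - 2 * k) * sec y ^ (n + 2 * k + 1)))
        (∑ k ∈ Finset.range ((n + 1) / 2 + 1),
          (n.factorial : ℝ) * ((n + 1).choose (2 * k)) *
            (((n + 1 - 2 * k : ℕ) * Real.tan x ^ (n + 1 - 2 * k - 1) * (1 / Real.cos x ^ 2)) *
                sec x ^ (n + 2 * k + 1)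
              + Real.tan x ^ (n + 1 - 2 * k) *
                ((n + 2 * k + 1 : ℕ) * sec x ^ (n + 2 * k + 1 - 1) * (sec x * Real.tan x)))) x := by
      refine HasDerivAt.fun_sum fun k _ => ?_
      exact (((Real.hasDerivAt_tan hx).pow _).mul ((hasDerivAt_sec hx).pow _)).const_mul _
    rw [hD.deriv]
    have hsec2 : (1 : ℝ) / Real.cos x ^ 2 = sec x ^ 2 := by
      rw [sec, one_div, inv_pow]
    rw [hsec2]
    exact sum_step n (Real.tan x) (sec x)
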